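/- Let n_1 ≥ ... ≥ n_r and m_1 ≥ ... ≥ m_t be two partitions with conjugate parts n'_s = #{p : n_p ≥ s} and m'_s = #{q : m_q ≥ s}. Then Σ_{p=1}^{r} Σ_{q=1}^{t} min(2·n_p, m_q) = Σ_{s ≥ 1} n'_s · ( m'_{2s-1} + m'_{2s} ). -/

import Mathlib

open Finset

lemma min_two_sum (a b : ℕ) :
    min (2*a) b = ∑ s ∈ Finset.Icc 1 a,
      ((if 2*s-1 ≤ b then 1 else 0) + (if 2*s ≤ b then 1 else 0)) := by
  induction a with
  | zero => simp
  | succ a ih =>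
    rw [Finset.sum_Icc_succ_top (by omega), ← ih]
    split_ifs <;> omega

lemma min_two_sum' (a b N : ℕ) (h : a ≤ N) :
    min (2*a) b = ∑ s ∈ Finset.Icc 1 N,
      (if s ≤ a then 1 else 0) *
        ((if 2*s-1 ≤ b then 1 else 0) + (if 2*s ≤ b then 1 else 0)) := by
  rw [min_two_sum a b]
  rw [← Finset.sum_subset (Finset.Icc_subset_Icc_right h)
    (fun x hxN hx => by
      simp only [Finset.mem_Icc] at hxN hx
      have : ¬ x ≤ a := by omega
      simp [this])]
  apply Finset.sum_congr rfl
  intro x hx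
  simp only [Finset.mem_Icc] at hx
  simp [hx.2]

/-- For two partitions `n_1 ≥ … ≥ n_r` and `m_1 ≥ … ≥ m_t` with conjugate parts
`n'_s = #{p : n_p ≥ s}` and `m'_s = #{q : m_q ≥ s}`, we have
`Σ_p Σ_q min(2 n_p, m_q) = Σ_{s≥1} n'_s (m'_{2s-1} + m'_{2s})`. -/
theorem statement3 (r t : ℕ) (n : Fin r → ℕ) (m : Fin t → ℕ)
    (hnpos : ∀ p, 0 < n p) (hmpos : ∀ q, 0 < m q)
    (hndec : ∀ p q : Fin r, p ≤ q → n q ≤ n p)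
    (hmdec : ∀ p q : Fin t, p ≤ q → m q ≤ m p) :
    ∑ p : Fin r, ∑ q : Fin t, min (2 * n p) (m q) =
      ∑ s ∈ Finset.Icc 1 (Finset.univ.sup n),
        ((Finset.univ.filter fun p : Fin r => s ≤ n p).card) *
          (((Finset.univ.filter fun q : Fin t => 2 * s - 1 ≤ m q).card) +
            ((Finset.univ.filter fun q : Fin t => 2 * s ≤ m q).card)) := by
  classical
  have hle : ∀ p, n p ≤ Finset.univ.sup n := fun p => Finset.le_sup (Finset.mem_univ p)
  have lhs : ∑ p : Fin r, ∑ q : Fin t, min (2 * n p) (m q) =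
      ∑ p : Fin r, ∑ s ∈ Finset.Icc 1 (Finset.univ.sup n), ∑ q : Fin t,
        (if s ≤ n p then 1 else 0) *
          ((if 2*s-1 ≤ m q then 1 else 0) + (if 2*s ≤ m q then 1 else 0)) := by
    refine Finset.sum_congr rfl fun p _ => ?_
    rw [← Finset.sum_comm]
    exact Finset.sum_congr rfl fun q _ => min_two_sum' (n p) (m q) _ (hle p)
  rw [lhs, Finset.sum_comm]
  apply Finset.sum_congr rfl
  intro s _
  rw [Finset.card_filter, Finset.card_filter, Finset.card_filter,
    ← Finset.sum_add_distrib, Finset.sum_mul_sum]
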